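/- Suppose W is determined by the pair (Y_{[k]}, K), i.e., H(W | Y_{[k]}, K) = 0, and K takes values in a finite set of cardinality at most N. Then for every integer r with 1 ≤ r ≤ k, Σ_{S ⊆ {1,…,k}, |S| = r} H(W | Y_S, X) ≤ C(k,r) · ( ((k−r)/k) · H(Y_{[k]} | X) + log N ); equivalently, the average of H(W | Y_S, X) over all r-element subsets S is at most ((k−r)/k) · H(Y_{[k]} | X) + log N. -/

import Mathlib

open Finset

/-- Probability that the finitely-valued random variable `X` takes value `x`,
with respect to the probability mass function `p` on the finite sample space `Ω`. -/
noncomputable def pmfProb {Ω : Type*} [Fintype Ω] {α : Type*} [Fintype α] [DecidableEq α]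
    (p : Ω → ℝ) (X : Ω → α) (x : α) : ℝ :=
  ∑ ω, if X ω = x then p ω else 0

/-- Shannon entropy (natural logarithm) of the random variable `X`. -/
noncomputable def entH {Ω : Type*} [Fintype Ω] {α : Type*} [Fintype α] [DecidableEq α]
    (p : Ω → ℝ) (X : Ω → α) : ℝ :=
  ∑ x, Real.negMulLog (pmfProb p X x)

/-- Conditional Shannon entropy `H(X|Y) = H(X,Y) - H(Y)`. -/
noncomputable def condH {Ω : Type*} [Fintype Ω] {α β : Type*} [Fintype α] [DecidableEq α]
    [Fintype β] [DecidableEq β] (p : Ω → ℝ) (X : Ω → α) (Y : Ω → β) : ℝ :=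
  entH p (fun ω => (X ω, Y ω)) - entH p Y

/-- Mutual information `I(X;Y) = H(X) + H(Y) - H(X,Y)`. -/
noncomputable def mutInfo {Ω : Type*} [Fintype Ω] {α β : Type*} [Fintype α] [DecidableEq α]
    [Fintype β] [DecidableEq β] (p : Ω → ℝ) (X : Ω → α) (Y : Ω → β) : ℝ :=
  entH p X + entH p Y - entH p (fun ω => (X ω, Y ω))

/-- The conditional probability mass function given an event `E`. -/
noncomputable def condPMF {Ω : Type*} [Fintype Ω] (p : Ω → ℝ) (E : Ω → Prop)
    [DecidablePred E] : Ω → ℝ :=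
  fun ω => if E ω then p ω / (∑ ω' ∈ Finset.univ.filter E, p ω') else 0


section Basic
variable {Ω : Type*} [Fintype Ω] {α β γ : Type*} [Fintype α] [DecidableEq α]
  [Fintype β] [DecidableEq β] [Fintype γ] [DecidableEq γ]
  {p : Ω → ℝ}

lemma pmfProb_nonneg (hp : ∀ ω, 0 ≤ p ω) (X : Ω → α) (x : α) : 0 ≤ pmfProb p X x := by
  refine Finset.sum_nonneg fun ω _ => ?_
  split
  · exact hp ω
  · exact le_refl 0

lemma sum_pmfProb (p : Ω → ℝ) (X : Ω → α) : ∑ x, pmfProb p X x = ∑ ω, p ω := by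
  unfold pmfProb
  rw [Finset.sum_comm]
  exact Finset.sum_congr rfl fun ω _ => by simp

lemma le_pmfProb (hp : ∀ ω, 0 ≤ p ω) (X : Ω → α) (ω : Ω) : p ω ≤ pmfProb p X (X ω) := by
  unfold pmfProb
  refine Finset.single_le_sum (f := fun ω' => if X ω' = X ω then p ω' else 0)
    (fun ω' _ => ?_) (Finset.mem_univ ω) |>.trans_eq' (by simp)
  split
  · exact hp ω'
  · exact le_refl 0

lemma sum_mul_comp (p : Ω → ℝ) (X : Ω → α) (f : α → ℝ) :
    ∑ x, pmfProb p X x * f x = ∑ ω, p ω * f (X ω) := by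
  unfold pmfProb
  simp_rw [Finset.sum_mul, ite_mul, zero_mul]
  rw [Finset.sum_comm]
  exact Finset.sum_congr rfl fun ω _ => by simp

lemma entH_eq_sum_omega (p : Ω → ℝ) (X : Ω → α) :
    entH p X = ∑ ω, p ω * (- Real.log (pmfProb p X (X ω))) := by
  rw [← sum_mul_comp p X (fun x => - Real.log (pmfProb p X x))]
  unfold entH
  refine Finset.sum_congr rfl fun x _ => ?_
  rw [Real.negMulLog]; ring

end Basic

section Comp
variable {Ω : Type*} [Fintype Ω] {α β γ : Type*} [Fintype α] [DecidableEq α]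
  [Fintype β] [DecidableEq β] [Fintype γ] [DecidableEq γ]
  {p : Ω → ℝ}

lemma pmfProb_comp_inj (p : Ω → ℝ) {g : α → β} (hg : Function.Injective g)
    (X : Ω → α) (x : α) : pmfProb p (fun ω => g (X ω)) (g x) = pmfProb p X x := by
  unfold pmfProb
  exact Finset.sum_congr rfl fun ω _ => by
    congr 1
    simp [hg.eq_iff]

lemma entH_comp_inj (p : Ω → ℝ) {g : α → β} (hg : Function.Injective g) (X : Ω → α) :
    entH p (fun ω => g (X ω)) = entH p X := by
  unfold entH
  have h1 : ∑ y ∈ Finset.univ.image g, Real.negMulLog (pmfProb p (fun ω => g (X ω)) y)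
      = ∑ x : α, Real.negMulLog (pmfProb p X x) := by
    rw [Finset.sum_image (fun x _ y _ h => hg h)]
    exact Finset.sum_congr rfl fun x _ => by rw [pmfProb_comp_inj p hg]
  rw [← h1]
  refine (Finset.sum_subset (Finset.subset_univ (Finset.univ.image g)) ?_).symm
  intro y _ hy
  have : pmfProb p (fun ω => g (X ω)) y = 0 := by
    unfold pmfProb
    refine Finset.sum_eq_zero fun ω _ => ?_
    have : g (X ω) ≠ y := fun h => hy (Finset.mem_image.mpr ⟨X ω, Finset.mem_univ _, h⟩)
    simp [this]
  simp [this]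

lemma negMulLog_add_le {a b : ℝ} (ha : 0 ≤ a) (hb : 0 ≤ b) :
    Real.negMulLog (a + b) ≤ Real.negMulLog a + Real.negMulLog b := by
  have key : ∀ x y : ℝ, 0 ≤ x → 0 ≤ y → -(x * Real.log (x + y)) ≤ Real.negMulLog x := by
    intro x y hx hy
    rcases eq_or_lt_of_le hx with h | h
    · simp [← h, Real.negMulLog]
    · rw [Real.negMulLog, neg_mul, neg_le_neg_iff]
      exact mul_le_mul_of_nonneg_left (Real.log_le_log h (by linarith)) hx
  have h1 := key a b ha hb
  have h2 := key b a hb ha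
  rw [add_comm b a] at h2
  have : Real.negMulLog (a + b) = -(a * Real.log (a + b)) + -(b * Real.log (a + b)) := by
    rw [Real.negMulLog]; ring
  linarith

lemma negMulLog_sum_le {ι : Type*} [DecidableEq ι] (s : Finset ι) (f : ι → ℝ) (hf : ∀ i ∈ s, 0 ≤ f i) :
    Real.negMulLog (∑ i ∈ s, f i) ≤ ∑ i ∈ s, Real.negMulLog (f i) := by
  induction s using Finset.induction_on with
  | empty => simp
  | insert a s h ih =>
    rw [Finset.sum_insert h, Finset.sum_insert h]
    refine (negMulLog_add_le (hf a (Finset.mem_insert_self a s))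
      (Finset.sum_nonneg fun i hi => hf i (Finset.mem_insert_of_mem hi))).trans ?_
    exact add_le_add_right (ih fun i hi => hf i (Finset.mem_insert_of_mem hi)) _

lemma pmfProb_comp_eq_sum (p : Ω → ℝ) (g : α → β) (X : Ω → α) (y : β) :
    pmfProb p (fun ω => g (X ω)) y
      = ∑ x ∈ Finset.univ.filter (fun x => g x = y), pmfProb p X x := by
  unfold pmfProb
  rw [Finset.sum_comm]
  refine Finset.sum_congr rfl fun ω _ => ?_
  by_cases h : g (X ω) = y
  · rw [if_pos h, Finset.sum_ite_eq (filter (fun x => g x = y) univ) (X ω) (fun _ => p ω)]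
    simp [h]
  · rw [if_neg h, Finset.sum_eq_zero]
    intro x hx
    rcases Finset.mem_filter.mp hx with ⟨-, hgx⟩
    have : X ω ≠ x := fun he => h (he ▸ hgx)
    simp [this]

lemma entH_comp_le (hp : ∀ ω, 0 ≤ p ω) (g : α → β) (X : Ω → α) :
    entH p (fun ω => g (X ω)) ≤ entH p X := by
  unfold entH
  calc ∑ y, Real.negMulLog (pmfProb p (fun ω => g (X ω)) y)
      ≤ ∑ y, ∑ x ∈ Finset.univ.filter (fun x => g x = y), Real.negMulLog (pmfProb p X x) := by
        refine Finset.sum_le_sum fun y _ => ?_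
        rw [pmfProb_comp_eq_sum]
        exact negMulLog_sum_le _ _ fun x _ => pmfProb_nonneg hp X x
    _ = ∑ x, Real.negMulLog (pmfProb p X x) := by
        exact Finset.sum_fiberwise _ _ _

lemma condH_nonneg (hp : ∀ ω, 0 ≤ p ω) (X : Ω → α) (Y : Ω → β) : 0 ≤ condH p X Y := by
  have := entH_comp_le (p := p) hp (Prod.snd : α × β → β) (fun ω => (X ω, Y ω))
  unfold condH
  linarith [this]

end Comp

section Submod
variable {Ω : Type*} [Fintype Ω] {α μ υ ζ : Type*} [Fintype α] [DecidableEq α]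
  [Fintype μ] [DecidableEq μ]
  [Fintype υ] [DecidableEq υ] [Fintype ζ] [DecidableEq ζ] {p : Ω → ℝ}

lemma pmfProb_snd_marginal (p : Ω → ℝ) (U : Ω → υ) (Z : Ω → ζ) (z : ζ) :
    ∑ u, pmfProb p (fun ω => (U ω, Z ω)) (u, z) = pmfProb p Z z := by
  unfold pmfProb
  rw [Finset.sum_comm]
  refine Finset.sum_congr rfl fun ω _ => ?_
  by_cases h : Z ω = z
  · simp [Prod.ext_iff, h]
  · simp [Prod.ext_iff, h]

lemma negMulLog_le_aux {q : ℝ} (hq : 0 ≤ q) {n : ℕ} (hn : 0 < n) :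
    Real.negMulLog q ≤ q * Real.log n + ((n : ℝ))⁻¹ - q := by
  have hn' : (0:ℝ) < n := Nat.cast_pos.mpr hn
  rcases hq.eq_or_lt with h | h
  · simp [← h, Real.negMulLog]
  · have hnq : (0:ℝ) < (n:ℝ) * q := by positivity
    have e1 : Real.log ((n:ℝ) * q) = Real.log n + Real.log q :=
      Real.log_mul (ne_of_gt hn') (ne_of_gt h)
    have e2 : -Real.log ((n:ℝ)*q) ≤ ((n:ℝ)*q)⁻¹ - 1 := by
      rw [← Real.log_inv]
      exact Real.log_le_sub_one_of_pos (by positivity)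
    have e3 : q * ((n:ℝ)*q)⁻¹ = ((n:ℝ))⁻¹ := by
      field_simp
    have e4 : q * (-Real.log ((n:ℝ)*q)) ≤ q * (((n:ℝ)*q)⁻¹ - 1) :=
      mul_le_mul_of_nonneg_left e2 h.le
    rw [Real.negMulLog]
    nlinarith [e4, e3, e1]

lemma entH_le_log (hp : ∀ ω, 0 ≤ p ω) (hp1 : ∑ ω, p ω = 1) (X : Ω → α)
    (n : ℕ) (hn : 0 < n) (hcard : Fintype.card α ≤ n) :
    entH p X ≤ Real.log n := by
  have hn' : (0:ℝ) < n := Nat.cast_pos.mpr hn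
  have hsum : ∑ x, pmfProb p X x = 1 := by rw [sum_pmfProb, hp1]
  calc entH p X ≤ ∑ x, (pmfProb p X x * Real.log n + ((n : ℝ))⁻¹ - pmfProb p X x) :=
        Finset.sum_le_sum fun x _ => negMulLog_le_aux (pmfProb_nonneg hp X x) hn
    _ = (∑ x, pmfProb p X x) * Real.log n + (Fintype.card α : ℝ) * ((n:ℝ))⁻¹
          - ∑ x, pmfProb p X x := by
        rw [Finset.sum_sub_distrib, Finset.sum_add_distrib, ← Finset.sum_mul,
          Finset.sum_const, Finset.card_univ, nsmul_eq_mul]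
    _ ≤ Real.log n := by
        rw [hsum]
        have : (Fintype.card α : ℝ) * ((n:ℝ))⁻¹ ≤ 1 := by
          rw [mul_inv_le_iff₀ hn', one_mul]
          exact_mod_cast hcard
        linarith

lemma submod (hp : ∀ ω, 0 ≤ p ω) (hp1 : ∑ ω, p ω = 1)
    (W : Ω → μ) (U : Ω → υ) (Z : Ω → ζ) :
    entH p (fun ω => (W ω, (U ω, Z ω))) + entH p Z
      ≤ entH p (fun ω => (W ω, Z ω)) + entH p (fun ω => (U ω, Z ω)) := by
  set T : Ω → μ × (υ × ζ) := fun ω => (W ω, (U ω, Z ω)) with hT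
  set qWZ : μ × ζ → ℝ := pmfProb p (fun ω => (W ω, Z ω)) with hqWZ
  set qUZ : υ × ζ → ℝ := pmfProb p (fun ω => (U ω, Z ω)) with hqUZ
  set qZ : ζ → ℝ := pmfProb p Z with hqZ
  set q3 : μ × (υ × ζ) → ℝ := pmfProb p T with hq3
  set f : μ × (υ × ζ) → ℝ :=
    fun t => qWZ (t.1, t.2.2) * qUZ t.2 / (q3 t * qZ t.2.2) with hf
  have key : ∀ ω, p ω * (Real.log (qWZ (W ω, Z ω)) + Real.log (qUZ (U ω, Z ω))
      - Real.log (q3 (T ω)) - Real.log (qZ (Z ω))) ≤ p ω * f (T ω) - p ω := by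
    intro ω
    rcases (hp ω).eq_or_lt with h | h
    · simp [← h]
    · have ha : 0 < q3 (T ω) := lt_of_lt_of_le h (le_pmfProb hp T ω)
      have hb : 0 < qWZ (W ω, Z ω) := lt_of_lt_of_le h (le_pmfProb hp (fun ω => (W ω, Z ω)) ω)
      have hc : 0 < qUZ (U ω, Z ω) := lt_of_lt_of_le h (le_pmfProb hp (fun ω => (U ω, Z ω)) ω)
      have hd : 0 < qZ (Z ω) := lt_of_lt_of_le h (le_pmfProb hp Z ω)
      have hratio : 0 < f (T ω) := by
        rw [hf]
        dsimp only
        positivity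
      have hlog : Real.log (f (T ω)) ≤ f (T ω) - 1 := Real.log_le_sub_one_of_pos hratio
      have hlogf : Real.log (f (T ω)) = Real.log (qWZ (W ω, Z ω)) + Real.log (qUZ (U ω, Z ω))
          - Real.log (q3 (T ω)) - Real.log (qZ (Z ω)) := by
        rw [hf]
        dsimp only
        rw [Real.log_div (by positivity) (by positivity), Real.log_mul (ne_of_gt hb) (ne_of_gt hc),
          Real.log_mul (ne_of_gt ha) (ne_of_gt hd)]
        ring
      rw [← hlogf]
      calc p ω * Real.log (f (T ω)) ≤ p ω * (f (T ω) - 1) :=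
            mul_le_mul_of_nonneg_left hlog h.le
        _ = p ω * f (T ω) - p ω := by ring
  have hsum_ratio : ∑ ω, p ω * f (T ω) ≤ 1 := by
    rw [← sum_mul_comp p T f]
    have step1 : ∀ t : μ × (υ × ζ), q3 t * f t ≤ qWZ (t.1, t.2.2) * qUZ t.2 / qZ t.2.2 := by
      intro t
      have h1 : 0 ≤ qWZ (t.1, t.2.2) := pmfProb_nonneg hp _ _
      have h2 : 0 ≤ qUZ t.2 := pmfProb_nonneg hp _ _
      have h3 : 0 ≤ qZ t.2.2 := pmfProb_nonneg hp _ _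
      rcases eq_or_ne (q3 t) 0 with h | h
      · rw [h, zero_mul]
        positivity
      · rcases eq_or_ne (qZ t.2.2) 0 with h' | h'
        · rw [hf]
          dsimp only
          rw [h']
          simp
        · rw [hf]
          dsimp only
          refine le_of_eq ?_
          field_simp
    calc ∑ t, q3 t * f t ≤ ∑ t : μ × (υ × ζ), qWZ (t.1, t.2.2) * qUZ t.2 / qZ t.2.2 :=
          Finset.sum_le_sum fun t _ => step1 t
      _ = ∑ w, ∑ u, ∑ z, qWZ (w, z) * qUZ (u, z) / qZ z := by
          rw [Fintype.sum_prod_type]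
          exact Finset.sum_congr rfl fun w _ => by rw [Fintype.sum_prod_type]
      _ = ∑ w, ∑ z, ∑ u, qWZ (w, z) * qUZ (u, z) / qZ z :=
          Finset.sum_congr rfl fun w _ => Finset.sum_comm
      _ = ∑ z, ∑ w, ∑ u, qWZ (w, z) * qUZ (u, z) / qZ z := Finset.sum_comm
      _ = ∑ z, (∑ w, qWZ (w, z)) * ((∑ u, qUZ (u, z)) / qZ z) := by
          refine Finset.sum_congr rfl fun z _ => ?_
          simp_rw [mul_div_assoc, ← Finset.mul_sum, ← Finset.sum_div, ← Finset.sum_mul]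
      _ ≤ ∑ z, qZ z := by
          refine Finset.sum_le_sum fun z _ => ?_
          rw [hqWZ, hqUZ, hqZ, pmfProb_snd_marginal p W Z z, pmfProb_snd_marginal p U Z z]
          rcases eq_or_ne (pmfProb p Z z) 0 with h | h
          · rw [h]
            simp
          · rw [div_self h, mul_one]
      _ = 1 := by rw [hqZ, sum_pmfProb, hp1]
  have expand : entH p T + entH p Z - entH p (fun ω => (W ω, Z ω))
      - entH p (fun ω => (U ω, Z ω)) ≤ 0 := by
    rw [entH_eq_sum_omega p T, entH_eq_sum_omega p Z,
      entH_eq_sum_omega p (fun ω => (W ω, Z ω)), entH_eq_sum_omega p (fun ω => (U ω, Z ω))]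
    simp only [← hq3, ← hqWZ, ← hqUZ, ← hqZ]
    rw [← Finset.sum_add_distrib, ← Finset.sum_sub_distrib, ← Finset.sum_sub_distrib]
    have hterm : ∀ ω, p ω * (-Real.log (q3 (T ω))) + p ω * (-Real.log (qZ (Z ω)))
        - p ω * (-Real.log (qWZ (W ω, Z ω))) - p ω * (-Real.log (qUZ (U ω, Z ω)))
        ≤ p ω * f (T ω) - p ω := by
      intro ω
      nlinarith [key ω]
    calc ∑ ω, (p ω * (-Real.log (q3 (T ω))) + p ω * (-Real.log (qZ (Z ω)))
          - p ω * (-Real.log (qWZ (W ω, Z ω))) - p ω * (-Real.log (qUZ (U ω, Z ω))))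
        ≤ ∑ ω, (p ω * f (T ω) - p ω) := Finset.sum_le_sum fun ω _ => hterm ω
      _ = (∑ ω, p ω * f (T ω)) - 1 := by rw [Finset.sum_sub_distrib, hp1]
      _ ≤ 0 := by linarith [hsum_ratio]
  linarith [expand]

end Submod

section Derived
variable {Ω : Type*} [Fintype Ω] {α β γ δ : Type*} [Fintype α] [DecidableEq α]
  [Fintype β] [DecidableEq β] [Fintype γ] [DecidableEq γ] [Fintype δ] [DecidableEq δ]
  {p : Ω → ℝ}

lemma condH_pair_le (hp : ∀ ω, 0 ≤ p ω) (hp1 : ∑ ω, p ω = 1)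
    (W : Ω → α) (U : Ω → β) (Z : Ω → γ) :
    condH p W (fun ω => (U ω, Z ω)) ≤ condH p W Z := by
  unfold condH
  linarith [submod hp hp1 W U Z]

lemma entH_const_unit (hp1 : ∑ ω, p ω = 1) : entH p (fun _ : Ω => (() : Unit)) = 0 := by
  simp [entH, pmfProb, hp1]

lemma condH_le_entH (hp : ∀ ω, 0 ≤ p ω) (hp1 : ∑ ω, p ω = 1)
    (W : Ω → α) (V : Ω → γ) : condH p W V ≤ entH p W := by
  have h := submod hp hp1 W V (fun _ => (() : Unit))
  have e1 : entH p (fun ω => (W ω, (V ω, ()))) = entH p (fun ω => (W ω, V ω)) :=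
    entH_comp_inj p (g := fun q : α × γ => (q.1, (q.2, ())))
      (fun a b hab => by
        simp only [Prod.mk.injEq] at hab
        exact Prod.ext hab.1 hab.2.1) (fun ω => (W ω, V ω))
  have e2 : entH p (fun ω => (W ω, ())) = entH p W :=
    entH_comp_inj p (g := fun w : α => (w, ()))
      (fun a b hab => by simpa using hab) W
  have e3 : entH p (fun ω => (V ω, ())) = entH p V :=
    entH_comp_inj p (g := fun v : γ => (v, ()))
      (fun a b hab => by simpa using hab) V
  have e4 : entH p (fun _ : Ω => (() : Unit)) = 0 := entH_const_unit hp1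
  unfold condH
  linarith [h]

lemma condH_le_comp (hp : ∀ ω, 0 ≤ p ω) (hp1 : ∑ ω, p ω = 1)
    (W : Ω → α) (V : Ω → γ) (g : γ → δ) :
    condH p W V ≤ condH p W (fun ω => g (V ω)) := by
  have e1 : entH p (fun ω => (W ω, (V ω, g (V ω)))) = entH p (fun ω => (W ω, V ω)) :=
    entH_comp_inj p (g := fun q : α × γ => (q.1, (q.2, g q.2)))
      (fun a b hab => by
        simp only [Prod.mk.injEq] at hab
        exact Prod.ext hab.1 hab.2.1) (fun ω => (W ω, V ω))
  have e2 : entH p (fun ω => (V ω, g (V ω))) = entH p V :=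
    entH_comp_inj p (g := fun v : γ => (v, g v))
      (fun a b hab => by
        simp only [Prod.mk.injEq] at hab
        exact hab.1) V
  have h := condH_pair_le hp hp1 W V (fun ω => g (V ω))
  unfold condH at *
  linarith [h]

lemma condH_comp_le_left (hp : ∀ ω, 0 ≤ p ω) (g : α → β) (W : Ω → α) (V : Ω → γ) :
    condH p (fun ω => g (W ω)) V ≤ condH p W V := by
  unfold condH
  have := entH_comp_le (p := p) hp (fun q : α × γ => (g q.1, q.2)) (fun ω => (W ω, V ω))
  linarith [this]

lemma condH_chain (p : Ω → ℝ) (W : Ω → α) (U : Ω → β) (Z : Ω → γ) :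
    condH p (fun ω => (W ω, U ω)) Z
      = condH p U Z + condH p W (fun ω => (U ω, Z ω)) := by
  have e1 : entH p (fun ω => (W ω, (U ω, Z ω))) = entH p (fun ω => ((W ω, U ω), Z ω)) :=
    entH_comp_inj p (g := fun q : (α × β) × γ => (q.1.1, (q.1.2, q.2)))
      (fun a b hab => by
        simp only [Prod.mk.injEq] at hab
        exact Prod.ext (Prod.ext hab.1 hab.2.1) hab.2.2) (fun ω => ((W ω, U ω), Z ω))
  unfold condH
  linarith [e1]

end Derived

/-- if `W` is determined by `(Y_{[k]}, K)` and `K` takes values in a finite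
set of cardinality at most `N`, then for every `1 ≤ r ≤ k`,
`∑_{|S| = r} H(W | Y_S, X) ≤ C(k,r) * (((k-r)/k) * H(Y_{[k]} | X) + log N)`. -/
theorem sum_condEntropy_message_rand_le {Ω α β μ κ : Type*} [Fintype Ω] [Fintype α]
    [DecidableEq α] [Fintype β] [DecidableEq β] [Fintype μ] [DecidableEq μ]
    [Fintype κ] [DecidableEq κ]
    (p : Ω → ℝ) (hp : ∀ ω, 0 ≤ p ω) (hp1 : ∑ ω, p ω = 1)
    (k : ℕ) (X : Ω → β) (Y : Fin k → Ω → α) (K : Ω → κ) (W : Ω → μ)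
    (N : ℕ) (hN : 1 ≤ N) (hK : Fintype.card κ ≤ N)
    (hW : condH p W (fun ω => ((fun j : Fin k => Y j ω), K ω)) = 0)
    (r : ℕ) (hr1 : 1 ≤ r) (hrk : r ≤ k) :
    ∑ S ∈ Finset.powersetCard r (Finset.univ : Finset (Fin k)),
        condH p W (fun ω => ((fun j : ↥S => Y j.1 ω), X ω))
      ≤ (k.choose r : ℝ) *
          (((k : ℝ) - (r : ℝ)) / (k : ℝ) * condH p (fun ω (j : Fin k) => Y j ω) X
            + Real.log N) := by
  classical
  have hk : 0 < k := lt_of_lt_of_le hr1 hrk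
  have hk' : (0:ℝ) < k := by exact_mod_cast hk
  set Hfull : ℝ := condH p (fun ω (j : Fin k) => Y j ω) X with hHfull
  set F : Finset (Fin k) → ℝ := fun S => condH p (fun ω (j : ↥S) => Y j.1 ω) X with hF
  -- chain rule
  have chainF : ∀ (T : Finset (Fin k)) (i : Fin k) (hi : i ∈ T),
      F T = F (T.erase i)
        + condH p (Y i) (fun ω => ((fun j : ↥(T.erase i) => Y j.1 ω), X ω)) := by
    intro T i hi
    have hchain := condH_chain p (Y i) (fun ω (j : ↥(T.erase i)) => Y j.1 ω) X
    have hg : Function.Injective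
        (fun q : (↥T → α) × β =>
          ((q.1 ⟨i, hi⟩, fun j : ↥(T.erase i) => q.1 ⟨j.1, Finset.mem_of_mem_erase j.2⟩), q.2)) := by
      intro a b hab
      simp only [Prod.mk.injEq, funext_iff] at hab
      obtain ⟨⟨h1, h2⟩, h3⟩ := hab
      refine Prod.ext ?_ h3
      funext j
      rcases j with ⟨jv, hj⟩
      by_cases hji : jv = i
      · subst hji
        exact h1
      · exact h2 ⟨jv, Finset.mem_erase.mpr ⟨hji, hj⟩⟩
    have e : entH p (fun ω => ((Y i ω, fun j : ↥(T.erase i) => Y j.1 ω), X ω))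
        = entH p (fun ω => ((fun j : ↥T => Y j.1 ω), X ω)) :=
      entH_comp_inj p hg (fun ω => ((fun j : ↥T => Y j.1 ω), X ω))
    rw [hF]
    dsimp only
    unfold condH at hchain ⊢
    linarith [hchain, e]
  -- restriction increases conditional entropy
  have restr : ∀ (S T : Finset (Fin k)) (hST : S ⊆ T) (V : Ω → α),
      condH p V (fun ω => ((fun j : ↥T => Y j.1 ω), X ω))
        ≤ condH p V (fun ω => ((fun j : ↥S => Y j.1 ω), X ω)) := by
    intro S T hST V
    exact condH_le_comp hp hp1 V (fun ω => ((fun j : ↥T => Y j.1 ω), X ω))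
      (fun q => ((fun j : ↥S => q.1 ⟨j.1, hST j.2⟩), q.2))
  -- Han single step
  have hanStep : ∀ S : Finset (Fin k),
      ((S.card : ℝ) - 1) * F S ≤ ∑ i ∈ S, F (S.erase i) := by
    intro S
    induction S using Finset.induction_on with
    | empty =>
      simp only [Finset.card_empty, Finset.sum_empty, Nat.cast_zero]
      have h0 : 0 ≤ F ∅ := condH_nonneg hp _ _
      linarith
    | @insert a S ha ih =>
      have hcard : (insert a S).card = S.card + 1 := Finset.card_insert_of_notMem ha
      have key : ∀ i ∈ S, F (insert a S) ≤ F ((insert a S).erase i) + F S - F (S.erase i) := by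
        intro i hiS
        have hiT : i ∈ insert a S := Finset.mem_insert_of_mem hiS
        have h1 := chainF (insert a S) i hiT
        have h2 := chainF S i hiS
        have h3 := restr (S.erase i) ((insert a S).erase i)
          (Finset.erase_subset_erase i (Finset.subset_insert a S)) (Y i)
        linarith
      have hsumkey := Finset.sum_le_sum key
      simp only [Finset.sum_const, nsmul_eq_mul, Finset.sum_sub_distrib,
        Finset.sum_add_distrib] at hsumkey
      rw [hcard, Finset.sum_insert ha, Finset.erase_insert ha]
      push_cast
      linarith [hsumkey, ih]
  -- F univ = Hfull
  have hFuniv : F Finset.univ = Hfull := by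
    have e : entH p (fun ω => ((fun j : ↥(Finset.univ : Finset (Fin k)) => Y j.1 ω), X ω))
        = entH p (fun ω => ((fun j : Fin k => Y j ω), X ω)) :=
      entH_comp_inj p
        (g := fun q : (Fin k → α) × β =>
          ((fun j : ↥(Finset.univ : Finset (Fin k)) => q.1 j.1), q.2))
        (fun a b hab => by
          simp only [Prod.mk.injEq, funext_iff] at hab
          exact Prod.ext (funext fun i => hab.1 ⟨i, Finset.mem_univ i⟩) hab.2)
        (fun ω => ((fun j : Fin k => Y j ω), X ω))
    rw [hF, hHfull]
    dsimp only
    unfold condH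
    linarith [e]
  -- Han inequality by decreasing induction
  have hanQ : ∀ m, m ≤ k → ((m:ℝ)/k) * (k.choose m) * Hfull
      ≤ ∑ S ∈ Finset.powersetCard m Finset.univ, F S := by
    intro m hm
    induction hm using Nat.decreasingInduction with
    | self =>
      have hpc : Finset.powersetCard k (Finset.univ : Finset (Fin k)) = {Finset.univ} := by
        have h := Finset.powersetCard_self (Finset.univ : Finset (Fin k))
        rwa [Finset.card_univ, Fintype.card_fin] at h
      rw [hpc, Finset.sum_singleton, Nat.choose_self, Nat.cast_one, hFuniv,
        div_self (ne_of_gt hk')]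
      linarith
    | of_succ n hn ih =>
      set A : ℝ := ∑ T ∈ Finset.powersetCard (n+1) Finset.univ, F T with hA
      set B : ℝ := ∑ S ∈ Finset.powersetCard n Finset.univ, F S with hB
      have hstep : (n:ℝ) * A
          ≤ ∑ T ∈ Finset.powersetCard (n+1) Finset.univ, ∑ i ∈ T, F (T.erase i) := by
        rw [hA, Finset.mul_sum]
        refine Finset.sum_le_sum fun T hT => ?_
        have hcard : T.card = n+1 := (Finset.mem_powersetCard.mp hT).2
        have h := hanStep T
        rw [hcard] at h
        push_cast at h
        linarith
      have dc : ∑ T ∈ Finset.powersetCard (n+1) Finset.univ, ∑ i ∈ T, F (T.erase i)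
          = ∑ S ∈ Finset.powersetCard n (Finset.univ : Finset (Fin k)),
              ∑ _i ∈ Finset.univ \ S, F S := by
        rw [Finset.sum_sigma', Finset.sum_sigma']
        refine Finset.sum_nbij' (i := fun q => ⟨q.1.erase q.2, q.2⟩)
          (j := fun q => ⟨insert q.2 q.1, q.2⟩) ?_ ?_ ?_ ?_ ?_
        · rintro ⟨T, i⟩ hq
          rw [Finset.mem_sigma] at hq
          obtain ⟨hT, hiT⟩ := hq
          rw [Finset.mem_sigma]
          constructor
          · rw [Finset.mem_powersetCard]
            refine ⟨Finset.subset_univ _, ?_⟩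
            rw [Finset.card_erase_of_mem hiT, (Finset.mem_powersetCard.mp hT).2]
            omega
          · rw [Finset.mem_sdiff]
            exact ⟨Finset.mem_univ _, Finset.notMem_erase _ _⟩
        · rintro ⟨S, i⟩ hq
          rw [Finset.mem_sigma] at hq
          obtain ⟨hS, hiS⟩ := hq
          rw [Finset.mem_sdiff] at hiS
          rw [Finset.mem_sigma]
          constructor
          · rw [Finset.mem_powersetCard]
            refine ⟨Finset.subset_univ _, ?_⟩
            rw [Finset.card_insert_of_notMem hiS.2, (Finset.mem_powersetCard.mp hS).2]
          · exact Finset.mem_insert_self _ _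
        · rintro ⟨T, i⟩ hq
          rw [Finset.mem_sigma] at hq
          simp only [Finset.insert_erase hq.2]
        · rintro ⟨S, i⟩ hq
          rw [Finset.mem_sigma] at hq
          have hiS : i ∉ S := (Finset.mem_sdiff.mp hq.2).2
          simp only [Finset.erase_insert hiS]
        · rintro ⟨T, i⟩ _
          rfl
      have dccount : ∀ S ∈ Finset.powersetCard n (Finset.univ : Finset (Fin k)),
          ∑ _i ∈ Finset.univ \ S, F S = ((k:ℝ) - n) * F S := by
        intro S hS
        rw [Finset.sum_const, nsmul_eq_mul, Finset.card_sdiff_of_subset (Finset.subset_univ S),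
          Finset.card_univ, Fintype.card_fin, (Finset.mem_powersetCard.mp hS).2,
          Nat.cast_sub hn.le]
      have e2 : ((k:ℝ)-n) * B = ∑ S ∈ Finset.powersetCard n Finset.univ, ((k:ℝ)-n) * F S := by
        rw [hB]
        exact Finset.mul_sum _ _ _
      have h1 : (n:ℝ) * A ≤ ((k:ℝ) - n) * B := by
        calc (n:ℝ) * A ≤ ∑ T ∈ Finset.powersetCard (n+1) Finset.univ, ∑ i ∈ T, F (T.erase i) :=
            hstep
          _ = ∑ S ∈ Finset.powersetCard n (Finset.univ : Finset (Fin k)),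
              ∑ _i ∈ Finset.univ \ S, F S := dc
          _ = ∑ S ∈ Finset.powersetCard n Finset.univ, ((k:ℝ) - n) * F S :=
            Finset.sum_congr rfl dccount
          _ = ((k:ℝ)-n) * B := e2.symm
      push_cast at ih
      have hid : ((n:ℝ)+1) * (k.choose (n+1)) = ((k:ℝ) - n) * (k.choose n) := by
        have h := Nat.choose_succ_right_eq k n
        have h' : ((k.choose (n+1) * (n+1) : ℕ) : ℝ) = ((k.choose n * (k - n) : ℕ) : ℝ) := by
          exact_mod_cast congrArg (Nat.cast : ℕ → ℝ) h
        push_cast [Nat.cast_sub hn.le] at h'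
        linarith
      have hkn0 : (0:ℝ) < (k:ℝ) - (n:ℝ) := by
        have : (n:ℝ) < k := by exact_mod_cast hn
        linarith
      have h2 : (n:ℝ) * (((n:ℝ)+1)/k * (k.choose (n+1)) * Hfull) ≤ (n:ℝ) * A :=
        mul_le_mul_of_nonneg_left ih (Nat.cast_nonneg n)
      have h3 : ((k:ℝ)-n) * ((n:ℝ)/k * (k.choose n) * Hfull) ≤ ((k:ℝ)-n) * B := by
        calc ((k:ℝ)-n) * ((n:ℝ)/k * (k.choose n) * Hfull)
            = (n:ℝ) * (((n:ℝ)+1)/k * (k.choose (n+1)) * Hfull) := by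
              linear_combination (-((n:ℝ) * Hfull / (k:ℝ))) * hid
          _ ≤ (n:ℝ) * A := h2
          _ ≤ ((k:ℝ)-n) * B := h1
      exact le_of_mul_le_mul_left h3 hkn0
  -- per-S bound
  have perS : ∀ S ∈ Finset.powersetCard r (Finset.univ : Finset (Fin k)),
      condH p W (fun ω => ((fun j : ↥S => Y j.1 ω), X ω))
        ≤ Hfull - F S + Real.log N := by
    intro S _
    have s1 : condH p W (fun ω => ((fun j : ↥S => Y j.1 ω), X ω))
        ≤ condH p (fun ω => (W ω, ((fun j : Fin k => Y j ω), K ω)))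
            (fun ω => ((fun j : ↥S => Y j.1 ω), X ω)) :=
      condH_comp_le_left hp Prod.fst
        (fun ω => (W ω, ((fun j : Fin k => Y j ω), K ω)))
        (fun ω => ((fun j : ↥S => Y j.1 ω), X ω))
    have s2 := condH_chain p W (fun ω => ((fun j : Fin k => Y j ω), K ω))
      (fun ω => ((fun j : ↥S => Y j.1 ω), X ω))
    have s3 : condH p W (fun ω => (((fun j : Fin k => Y j ω), K ω),
        ((fun j : ↥S => Y j.1 ω), X ω))) ≤ 0 := by
      have h := condH_le_comp hp hp1 W
        (fun ω => (((fun j : Fin k => Y j ω), K ω), ((fun j : ↥S => Y j.1 ω), X ω)))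
        Prod.fst
      calc condH p W (fun ω => (((fun j : Fin k => Y j ω), K ω),
              ((fun j : ↥S => Y j.1 ω), X ω)))
          ≤ condH p W (fun ω => ((fun j : Fin k => Y j ω), K ω)) := h
        _ = 0 := hW
    have s4 := condH_chain p K (fun ω (j : Fin k) => Y j ω)
      (fun ω => ((fun j : ↥S => Y j.1 ω), X ω))
    have s5 : condH p (fun ω => ((fun j : Fin k => Y j ω), K ω))
          (fun ω => ((fun j : ↥S => Y j.1 ω), X ω))
        = condH p (fun ω => (K ω, (fun j : Fin k => Y j ω)))
          (fun ω => ((fun j : ↥S => Y j.1 ω), X ω)) := by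
      have e5 : entH p (fun ω => ((K ω, (fun j : Fin k => Y j ω)),
            ((fun j : ↥S => Y j.1 ω), X ω)))
          = entH p (fun ω => (((fun j : Fin k => Y j ω), K ω),
            ((fun j : ↥S => Y j.1 ω), X ω))) :=
        entH_comp_inj p
          (g := fun q : ((Fin k → α) × κ) × ((↥S → α) × β) => ((q.1.2, q.1.1), q.2))
          (fun a b hab => by
            simp only [Prod.mk.injEq] at hab
            exact Prod.ext (Prod.ext hab.1.2 hab.1.1) hab.2)
          (fun ω => (((fun j : Fin k => Y j ω), K ω), ((fun j : ↥S => Y j.1 ω), X ω)))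
      unfold condH
      linarith [e5]
    have s6 : condH p K (fun ω => ((fun j : Fin k => Y j ω),
        ((fun j : ↥S => Y j.1 ω), X ω))) ≤ Real.log N := by
      refine (condH_le_entH hp hp1 K _).trans ?_
      exact entH_le_log hp hp1 K N hN hK
    have s7 : condH p (fun ω (j : Fin k) => Y j ω)
          (fun ω => ((fun j : ↥S => Y j.1 ω), X ω)) = Hfull - F S := by
      have e7 : entH p (fun ω => ((fun j : Fin k => Y j ω),
            ((fun j : ↥S => Y j.1 ω), X ω)))
          = entH p (fun ω => ((fun j : Fin k => Y j ω), X ω)) :=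
        entH_comp_inj p
          (g := fun q : (Fin k → α) × β => (q.1, ((fun j : ↥S => q.1 j.1), q.2)))
          (fun a b hab => by
            simp only [Prod.mk.injEq] at hab
            exact Prod.ext hab.1 hab.2.2)
          (fun ω => ((fun j : Fin k => Y j ω), X ω))
      rw [hHfull, hF]
      dsimp only
      unfold condH
      linarith [e7]
    linarith [s1, s2, s3, s4, s5, s6, s7]
  -- final assembly
  have hcardpc : (Finset.powersetCard r (Finset.univ : Finset (Fin k))).card = k.choose r := by
    rw [Finset.card_powersetCard, Finset.card_univ, Fintype.card_fin]
  calc ∑ S ∈ Finset.powersetCard r (Finset.univ : Finset (Fin k)),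
        condH p W (fun ω => ((fun j : ↥S => Y j.1 ω), X ω))
      ≤ ∑ S ∈ Finset.powersetCard r (Finset.univ : Finset (Fin k)),
          (Hfull - F S + Real.log N) := Finset.sum_le_sum perS
    _ = (k.choose r : ℝ) * (Hfull + Real.log N)
          - ∑ S ∈ Finset.powersetCard r (Finset.univ : Finset (Fin k)), F S := by
        rw [Finset.sum_add_distrib, Finset.sum_sub_distrib, Finset.sum_const,
          Finset.sum_const, hcardpc, nsmul_eq_mul, nsmul_eq_mul]
        ring
    _ ≤ (k.choose r : ℝ) * (Hfull + Real.log N) - ((r:ℝ)/k) * (k.choose r) * Hfull := by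
        linarith [hanQ r hrk]
    _ = (k.choose r : ℝ) * (((k:ℝ) - (r:ℝ)) / (k:ℝ) * Hfull + Real.log N) := by
        field_simp
        ring
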